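/- Let k be a field of characteristic ≠ 2, n ≥ 1, R = k[ε] the dual numbers over k, τ: R → R the k-algebra automorphism with τ(ε) = −ε (applied entrywise to matrices), J ∈ M_{2n}(k) ⊆ M_{2n}(R) the standard symplectic Gram matrix, σ(x) = J⁻¹·τ(x)ᵀ·J the associated involution of M_{2n}(R), and H = { x ∈ M_{2n}(R) : σ(x)·x = 1 and det x = 1 } the special unitary group. Then the entrywise reduction map ρ (given by ε ↦ 0) restricts to a surjective group homomorphism from H onto the symplectic group Sp(2n, k) = { S ∈ M_{2n}(k) : Sᵀ·J·S = J }. -/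

import Mathlib

open Matrix

noncomputable section

/-- The `k`-algebra automorphism `τ` of the dual numbers `k[ε]` with `τ(ε) = -ε`,
i.e. `a + bε ↦ a - bε`, as a plain function. -/
def dualConj (k : Type*) [Field k] : DualNumber k → DualNumber k :=
  fun x => TrivSqZeroExt.inl x.fst - TrivSqZeroExt.inr x.snd

/-- The standard symplectic Gram matrix `J = [[0, Iₙ], [-Iₙ, 0]]` over `k`. -/
def symplJ (k : Type*) [Field k] (n : ℕ) :
    Matrix (Fin n ⊕ Fin n) (Fin n ⊕ Fin n) k :=
  Matrix.fromBlocks 0 1 (-1) 0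

/-- `J` viewed as a matrix over the dual numbers `R = k[ε]`. -/
def symplJR (k : Type*) [Field k] (n : ℕ) :
    Matrix (Fin n ⊕ Fin n) (Fin n ⊕ Fin n) (DualNumber k) :=
  (symplJ k n).map (algebraMap k (DualNumber k))

/-- The involution `σ(x) = J⁻¹ ⬝ τ(x)ᵀ ⬝ J` of `M_{2n}(k[ε])`, where `τ` is applied
entrywise. -/
def dualInvolution (k : Type*) [Field k] (n : ℕ)
    (x : Matrix (Fin n ⊕ Fin n) (Fin n ⊕ Fin n) (DualNumber k)) :
    Matrix (Fin n ⊕ Fin n) (Fin n ⊕ Fin n) (DualNumber k) :=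
  (symplJR k n)⁻¹ * (xᵀ.map (dualConj k)) * symplJR k n

/-- The special unitary group `H = { x ∈ M_{2n}(k[ε]) : σ(x)·x = 1, det x = 1 }`. -/
def specialUnitary (k : Type*) [Field k] (n : ℕ) :
    Set (Matrix (Fin n ⊕ Fin n) (Fin n ⊕ Fin n) (DualNumber k)) :=
  {x | dualInvolution k n x * x = 1 ∧ x.det = 1}

/-- The entrywise reduction map `ρ : M_{2n}(k[ε]) → M_{2n}(k)` given by `ε ↦ 0`. -/
def dualRed (k : Type*) [Field k] (n : ℕ)
    (x : Matrix (Fin n ⊕ Fin n) (Fin n ⊕ Fin n) (DualNumber k)) :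
    Matrix (Fin n ⊕ Fin n) (Fin n ⊕ Fin n) k :=
  x.map TrivSqZeroExt.fst

/-! ### Auxiliary lemmas about the block matrix `J` over a commutative ring -/

section BlockJ

variable {A : Type*} [CommRing A] {n : ℕ}

lemma blockJ_sq :
    (fromBlocks 0 1 (-1) 0 : Matrix (Fin n ⊕ Fin n) (Fin n ⊕ Fin n) A) *
      fromBlocks 0 1 (-1) 0 = -1 := by
  rw [fromBlocks_multiply, ← fromBlocks_one, fromBlocks_neg]
  simp

lemma blockJ_det_mul :
    (fromBlocks 0 1 (-1) 0 : Matrix (Fin n ⊕ Fin n) (Fin n ⊕ Fin n) A).det *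
      (fromBlocks 0 1 (-1) 0 : Matrix (Fin n ⊕ Fin n) (Fin n ⊕ Fin n) A).det = 1 := by
  rw [← det_mul, blockJ_sq, ← neg_one_smul A (1 : Matrix (Fin n ⊕ Fin n) (Fin n ⊕ Fin n) A),
    det_smul, det_one, mul_one, Fintype.card_sum, Fintype.card_fin]
  exact Even.neg_one_pow (Even.add_self n)

lemma blockJ_isUnit_det :
    IsUnit (fromBlocks 0 1 (-1) 0 : Matrix (Fin n ⊕ Fin n) (Fin n ⊕ Fin n) A).det :=
  IsUnit.of_mul_eq_one _ blockJ_det_mul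

lemma blockJ_transpose :
    (fromBlocks 0 1 (-1) 0 : Matrix (Fin n ⊕ Fin n) (Fin n ⊕ Fin n) A)ᵀ =
      -fromBlocks 0 1 (-1) 0 := by
  rw [fromBlocks_transpose, fromBlocks_neg]
  simp

end BlockJ

/-! ### Symplectic matrices over a field have determinant 1 -/

section DetOne

variable {k : Type*} [Field k] {n : ℕ}

local notation "𝕁" => (fromBlocks 0 1 (-1) 0 : Matrix (Fin n ⊕ Fin n) (Fin n ⊕ Fin n) k)

lemma symplectic_isUnit_det {S : Matrix (Fin n ⊕ Fin n) (Fin n ⊕ Fin n) k}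
    (hS : Sᵀ * 𝕁 * S = 𝕁) : IsUnit S.det := by
  have h := congrArg Matrix.det hS
  rw [det_mul, det_mul, det_transpose] at h
  have hJ : (𝕁).det ≠ 0 := by
    intro h0
    have := blockJ_det_mul (A := k) (n := n)
    rw [h0, mul_zero] at this
    exact zero_ne_one this
  have h2 : S.det * S.det * (𝕁).det = 1 * (𝕁).det := by
    linear_combination h
  exact IsUnit.of_mul_eq_one _ (mul_right_cancel₀ hJ h2)

lemma vecMul_blockJ_eq (v : Fin n ⊕ Fin n → k) :
    v ᵥ* 𝕁 = -(𝕁 *ᵥ v) := by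
  have : v ᵥ* 𝕁 = (𝕁)ᵀ *ᵥ v := by rw [mulVec_transpose]
  rw [this, blockJ_transpose, neg_mulVec]

lemma dot_blockJ_self (h2 : (2 : k) ≠ 0) (v : Fin n ⊕ Fin n → k) :
    v ⬝ᵥ 𝕁 *ᵥ v = 0 := by
  have h : v ⬝ᵥ 𝕁 *ᵥ v = -(v ⬝ᵥ 𝕁 *ᵥ v) := by
    conv_lhs => rw [dotProduct_mulVec, vecMul_blockJ_eq]
    rw [neg_dotProduct, dotProduct_comm]
  have : (2 : k) * (v ⬝ᵥ 𝕁 *ᵥ v) = 0 := by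
    rw [two_mul]
    nth_rewrite 1 [h]
    ring
  rcases mul_eq_zero.mp this with h' | h'
  · exact absurd h' h2
  · exact h'

lemma blockJ_mulVec_eq (v : Fin n ⊕ Fin n → k) :
    𝕁 *ᵥ v = -(v ᵥ* 𝕁) := by
  rw [vecMul_blockJ_eq, neg_neg]

lemma transvection_mulVec (v x : Fin n ⊕ Fin n → k) :
    (1 + vecMulVec v (v ᵥ* 𝕁)) *ᵥ x = x + ((v ᵥ* 𝕁) ⬝ᵥ x) • v := by
  rw [add_mulVec, one_mulVec]
  congr 1
  ext i
  simp only [mulVec, dotProduct, vecMulVec_apply, Pi.smul_apply, smul_eq_mul]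
  rw [Finset.sum_mul]
  exact Finset.sum_congr rfl (fun j _ => by ring)

lemma transvection_det (h2 : (2 : k) ≠ 0) (v : Fin n ⊕ Fin n → k) :
    (1 + vecMulVec v (v ᵥ* 𝕁)).det = 1 := by
  rw [vecMulVec_eq Unit, det_one_add_replicateCol_mul_replicateRow]
  rw [← dotProduct_mulVec, dot_blockJ_self h2, add_zero]

lemma vecMulVec_mulVec_eq (u w x : Fin n ⊕ Fin n → k) :
    vecMulVec u w *ᵥ x = (w ⬝ᵥ x) • u := by
  ext i
  simp only [mulVec, dotProduct, vecMulVec_apply, Pi.smul_apply, smul_eq_mul]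
  rw [Finset.sum_mul]
  exact Finset.sum_congr rfl (fun j _ => by ring)

lemma mul_vecMulVec_eq (M : Matrix (Fin n ⊕ Fin n) (Fin n ⊕ Fin n) k)
    (u w : Fin n ⊕ Fin n → k) : M * vecMulVec u w = vecMulVec (M *ᵥ u) w := by
  ext i j
  simp only [mul_apply, vecMulVec_apply, mulVec, dotProduct]
  rw [Finset.sum_mul]
  exact Finset.sum_congr rfl (fun l _ => by ring)

lemma vecMulVec_mul_eq (M : Matrix (Fin n ⊕ Fin n) (Fin n ⊕ Fin n) k)
    (u w : Fin n ⊕ Fin n → k) : vecMulVec u w * M = vecMulVec u (w ᵥ* M) := by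
  ext i j
  simp only [mul_apply, vecMulVec_apply, vecMul, dotProduct]
  rw [Finset.mul_sum]
  exact Finset.sum_congr rfl (fun l _ => by ring)

lemma vecMulVec_transpose_eq (u w : Fin n ⊕ Fin n → k) :
    (vecMulVec u w)ᵀ = vecMulVec w u := by
  ext i j
  simp [vecMulVec_apply, mul_comm]

private lemma key_identity {R : Type*} [Ring R] (t j s : R) (h : t * (j * s) = j) :
    (t + 1) * (j * (s - 1)) = -((t - 1) * (j * (s + 1))) := by
  have e : (t + 1) * (j * (s - 1)) + (t - 1) * (j * (s + 1))
      = t * (j * s) + t * (j * s) - (j + j) := by noncomm_ring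
  rw [h] at e
  have e2 : (t + 1) * (j * (s - 1)) + (t - 1) * (j * (s + 1)) = 0 := by rw [e]; abel
  exact eq_neg_of_add_eq_zero_left e2

private lemma aux_ring {R : Type*} [Ring R] (M P Q W : R) (h1 : M * P = -W)
    (h2 : Q * M = W) (h3 : W * P = 0) : (1 + Q) * M * (1 + P) = M := by
  have expand : (1 + Q) * M * (1 + P) = M + M * P + Q * M + Q * M * P := by
    noncomm_ring
  rw [expand, h2, h1, h3]
  abel

lemma transvection_symplectic (h2 : (2 : k) ≠ 0) (v : Fin n ⊕ Fin n → k) :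
    (1 + vecMulVec v (v ᵥ* 𝕁))ᵀ * 𝕁 * (1 + vecMulVec v (v ᵥ* 𝕁)) = 𝕁 := by
  set w := v ᵥ* 𝕁 with hw
  have hdot : w ⬝ᵥ v = 0 := by
    rw [hw, ← dotProduct_mulVec, dot_blockJ_self h2]
  have htr : (1 + vecMulVec v w)ᵀ = 1 + vecMulVec w v := by
    rw [transpose_add, transpose_one, vecMulVec_transpose_eq]
  have r1 : 𝕁 * vecMulVec v w = -(vecMulVec w w) := by
    rw [mul_vecMulVec_eq, blockJ_mulVec_eq, ← hw]
    ext i j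
    simp [vecMulVec_apply]
  have r2 : vecMulVec w v * 𝕁 = vecMulVec w w := by
    rw [vecMulVec_mul_eq, ← hw]
  have r3 : vecMulVec w w * vecMulVec v w = 0 := by
    rw [mul_vecMulVec_eq, vecMulVec_mulVec_eq, hdot, zero_smul]
    ext i j
    simp [vecMulVec_apply]
  rw [htr]
  exact aux_ring _ _ _ _ r1 r2 r3

lemma cayley_det_one (h2 : (2 : k) ≠ 0) {S : Matrix (Fin n ⊕ Fin n) (Fin n ⊕ Fin n) k}
    (hS : Sᵀ * 𝕁 * S = 𝕁) (hP : IsUnit (S + 1).det) : S.det = 1 := by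
  set P := S + 1 with hPdef
  have : Invertible P := P.invertibleOfIsUnitDet hP
  have hPt : Invertible Pᵀ := P.invertibleTranspose
  set C := (S - 1) * P⁻¹ with hCdef
  have hS2 : Sᵀ * (𝕁 * S) = 𝕁 := by rw [← Matrix.mul_assoc]; exact hS
  -- the key polynomial identity
  have hkey : Pᵀ * (𝕁 * (S - 1)) = -((Sᵀ - 1) * (𝕁 * P)) := by
    have hPt' : Pᵀ = Sᵀ + 1 := by rw [hPdef, transpose_add, transpose_one]
    rw [hPt', hPdef]
    exact key_identity _ _ _ hS2
  -- C is Hamiltonian: 𝕁 C = -(Cᵀ 𝕁)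
  have hC : 𝕁 * C = -(Cᵀ * 𝕁) := by
    have hCt : Cᵀ = Pᵀ⁻¹ * (Sᵀ - 1) := by
      rw [hCdef, transpose_mul, transpose_nonsing_inv, transpose_sub, transpose_one]
    rw [hCt, hCdef]
    have : 𝕁 * ((S - 1) * P⁻¹) = (Pᵀ⁻¹ * (Pᵀ * (𝕁 * (S - 1)))) * P⁻¹ := by
      rw [Matrix.inv_mul_cancel_left_of_invertible, Matrix.mul_assoc]
    rw [this, hkey]
    calc Pᵀ⁻¹ * -((Sᵀ - 1) * (𝕁 * P)) * P⁻¹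
        = -(Pᵀ⁻¹ * (Sᵀ - 1) * 𝕁) * (P * P⁻¹) := by
          simp only [Matrix.mul_neg, Matrix.neg_mul, Matrix.mul_assoc]
      _ = -(Pᵀ⁻¹ * (Sᵀ - 1) * 𝕁) := by
          rw [Matrix.mul_inv_of_invertible, Matrix.mul_one]
  -- hence det (1 + C) = det (1 - C)
  have hdJ : (𝕁 : Matrix (Fin n ⊕ Fin n) (Fin n ⊕ Fin n) k).det ≠ 0 := by
    intro h0
    have := blockJ_det_mul (A := k) (n := n)
    rw [h0, mul_zero] at this
    exact zero_ne_one this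
  have hdet1 : (1 + C).det = (1 - C).det := by
    have h1 : 𝕁 * (1 + C) = (1 - C)ᵀ * 𝕁 := by
      rw [Matrix.mul_add, Matrix.mul_one, hC, transpose_sub, transpose_one, Matrix.sub_mul,
        Matrix.one_mul, sub_eq_add_neg]
    have h2' := congrArg Matrix.det h1
    rw [det_mul, det_mul, det_transpose] at h2'
    apply mul_left_cancel₀ hdJ
    rw [h2', mul_comm]
  -- compute both determinants
  have hCP : C * P = S - 1 := by
    rw [hCdef, Matrix.inv_mul_cancel_right_of_invertible]
  have e1 : (1 + C) * P = S + S := by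
    rw [Matrix.add_mul, Matrix.one_mul, hCP, hPdef]
    abel
  have e2 : (1 - C) * P = 1 + 1 := by
    rw [Matrix.sub_mul, Matrix.one_mul, hCP, hPdef]
    abel
  have c2 : (S + S) = (2 : k) • S := by
    rw [two_smul]
  have c2' : ((1 : Matrix (Fin n ⊕ Fin n) (Fin n ⊕ Fin n) k) + 1) = (2 : k) • (1 : Matrix (Fin n ⊕ Fin n) (Fin n ⊕ Fin n) k) := by
    rw [two_smul]
  have d1 := congrArg Matrix.det e1
  have d2 := congrArg Matrix.det e2
  rw [det_mul, c2, det_smul] at d1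
  rw [det_mul, c2', det_smul, det_one, mul_one] at d2
  have hpow : ((2 : k) ^ Fintype.card (Fin n ⊕ Fin n)) ≠ 0 := pow_ne_zero _ h2
  rw [hdet1, d2] at d1
  -- d1 : 2^c = 2^c * S.det
  exact mul_left_cancel₀ hpow (by rw [mul_one, ← d1])

theorem symplectic_det_one (h2 : (2 : k) ≠ 0) (S : Matrix (Fin n ⊕ Fin n) (Fin n ⊕ Fin n) k)
    (hS : Sᵀ * 𝕁 * S = 𝕁) : S.det = 1 := by
  suffices H : ∀ d (S : Matrix (Fin n ⊕ Fin n) (Fin n ⊕ Fin n) k), Sᵀ * 𝕁 * S = 𝕁 →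
      Module.finrank k (LinearMap.ker (Matrix.mulVecLin (S + 1))) = d → S.det = 1 by
    exact H _ S hS rfl
  intro d
  induction d using Nat.strong_induction_on with
  | _ d IH =>
  intro S hS hd
  by_cases h0 : d = 0
  · -- the kernel of S + 1 is trivial, so S + 1 is invertible : use the Cayley transform
    subst h0
    have hker : LinearMap.ker (Matrix.mulVecLin (S + 1)) = ⊥ := Submodule.finrank_eq_zero.mp hd
    have hdet : (S + 1).det ≠ 0 := by
      intro hdet0
      obtain ⟨v, hvne, hv0⟩ := (Matrix.exists_mulVec_eq_zero_iff).mpr hdet0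
      have : v ∈ LinearMap.ker (Matrix.mulVecLin (S + 1)) := by
        rw [LinearMap.mem_ker, Matrix.mulVecLin_apply, hv0]
      rw [hker, Submodule.mem_bot] at this
      exact hvne this
    exact cayley_det_one h2 hS (isUnit_iff_ne_zero.mpr hdet)
  · -- the kernel of S + 1 is nontrivial: shrink it with a symplectic transvection
    have hd0 : 0 < d := Nat.pos_of_ne_zero h0
    have hSdet : IsUnit S.det := symplectic_isUnit_det hS
    have : Invertible S := S.invertibleOfIsUnitDet hSdet
    have hkerne : LinearMap.ker (Matrix.mulVecLin (S + 1)) ≠ ⊥ := by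
      intro hbot
      rw [hbot, finrank_bot] at hd
      omega
    obtain ⟨x₀, hx₀mem, hx₀ne⟩ := (Submodule.ne_bot_iff _).mp hkerne
    have hx₀ : (S + 1) *ᵥ x₀ = 0 := hx₀mem
    -- 𝕁 x₀ ≠ 0
    have hJx₀ : 𝕁 *ᵥ x₀ ≠ 0 := by
      intro h
      apply hx₀ne
      have h1 : 𝕁 *ᵥ (𝕁 *ᵥ x₀) = 0 := by rw [h, mulVec_zero]
      rw [mulVec_mulVec, blockJ_sq, neg_mulVec, one_mulVec] at h1
      exact (neg_eq_zero.mp h1)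
    obtain ⟨i, hi⟩ : ∃ i, (𝕁 *ᵥ x₀) i ≠ 0 := by
      by_contra hc
      push_neg at hc
      exact hJx₀ (funext fun i => hc i)
    have haα : (Pi.single i 1 : Fin n ⊕ Fin n → k) ⬝ᵥ (𝕁 *ᵥ x₀) ≠ 0 := by
      rw [single_dotProduct, one_mul]
      exact hi
    -- the range of S + 1 is a proper subspace
    have hrange : LinearMap.range (Matrix.mulVecLin (S + 1)) ≠ ⊤ := by
      intro htop
      have hrk := LinearMap.finrank_range_add_finrank_ker (Matrix.mulVecLin (S + 1))
      rw [htop, finrank_top, hd] at hrk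
      omega
    obtain ⟨u, hu⟩ : ∃ u, u ∉ LinearMap.range (Matrix.mulVecLin (S + 1)) := by
      by_contra hc
      push_neg at hc
      exact hrange (Submodule.eq_top_iff'.mpr hc)
    have hbnotin : S *ᵥ (S⁻¹ *ᵥ u) ∉ LinearMap.range (Matrix.mulVecLin (S + 1)) := by
      rw [mulVec_mulVec, Matrix.mul_nonsing_inv _ hSdet, one_mulVec]
      exact hu
    -- choose a good vector v
    obtain ⟨v, hva, hvb⟩ : ∃ v, v ⬝ᵥ (𝕁 *ᵥ x₀) ≠ 0 ∧
        S *ᵥ v ∉ LinearMap.range (Matrix.mulVecLin (S + 1)) := by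
      set a : Fin n ⊕ Fin n → k := Pi.single i 1 with ha
      set b : Fin n ⊕ Fin n → k := S⁻¹ *ᵥ u with hb
      by_cases hA : S *ᵥ a ∈ LinearMap.range (Matrix.mulVecLin (S + 1))
      · by_cases hB : b ⬝ᵥ (𝕁 *ᵥ x₀) = 0
        · refine ⟨a + b, ?_, ?_⟩
          · rw [add_dotProduct, hB, add_zero]
            exact haα
          · intro hmem
            rw [mulVec_add] at hmem
            have := Submodule.sub_mem _ hmem hA
            rw [add_sub_cancel_left] at this
            exact hbnotin this
        · exact ⟨b, hB, hbnotin⟩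
      · exact ⟨a, haα, hA⟩
    -- the symplectic transvection T and the new matrix S * T
    set w : Fin n ⊕ Fin n → k := v ᵥ* 𝕁 with hw
    set T : Matrix (Fin n ⊕ Fin n) (Fin n ⊕ Fin n) k := 1 + vecMulVec v w with hT
    set S' := S * T with hS'def
    have hS' : S'ᵀ * 𝕁 * S' = 𝕁 := by
      have e : S'ᵀ * 𝕁 * S' = Tᵀ * (Sᵀ * 𝕁 * S) * T := by
        rw [hS'def, transpose_mul]
        simp only [Matrix.mul_assoc]
      rw [e, hS, hT, hw]
      exact transvection_symplectic h2 v
    -- mulVec formula for S' + 1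
    have hmv : ∀ x, (S' + 1) *ᵥ x = (S + 1) *ᵥ x + (w ⬝ᵥ x) • (S *ᵥ v) := by
      intro x
      rw [add_mulVec, add_mulVec, one_mulVec, hS'def, ← mulVec_mulVec, hT, hw,
        transvection_mulVec, mulVec_add, mulVec_smul]
      abel
    -- the kernel strictly decreases
    have hsub : LinearMap.ker (Matrix.mulVecLin (S' + 1)) ≤
        LinearMap.ker (Matrix.mulVecLin (S + 1)) := by
      intro x hx
      rw [LinearMap.mem_ker, Matrix.mulVecLin_apply, hmv] at hx
      by_cases hc : w ⬝ᵥ x = 0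
      · rw [hc, zero_smul, add_zero] at hx
        rw [LinearMap.mem_ker, Matrix.mulVecLin_apply]
        exact hx
      · exfalso
        apply hvb
        have hSv : (w ⬝ᵥ x) • (S *ᵥ v) = -((S + 1) *ᵥ x) := by
          rw [eq_neg_iff_add_eq_zero, add_comm]
          exact hx
        refine ⟨(w ⬝ᵥ x)⁻¹ • (-x), ?_⟩
        show (S + 1) *ᵥ ((w ⬝ᵥ x)⁻¹ • (-x)) = S *ᵥ v
        rw [mulVec_smul, mulVec_neg, ← hSv, smul_smul, inv_mul_cancel₀ hc, one_smul]
    -- x₀ is in the kernel of S + 1 but not in that of S' + 1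
    have hx₀notK' : x₀ ∉ LinearMap.ker (Matrix.mulVecLin (S' + 1)) := by
      rw [LinearMap.mem_ker, Matrix.mulVecLin_apply, hmv, hx₀, zero_add]
      have hwx₀ : w ⬝ᵥ x₀ ≠ 0 := by
        rw [hw, ← dotProduct_mulVec]
        exact hva
      have hSvne : S *ᵥ v ≠ 0 := by
        intro h0
        exact hvb (h0 ▸ Submodule.zero_mem _)
      exact smul_ne_zero hwx₀ hSvne
    have hne : LinearMap.ker (Matrix.mulVecLin (S' + 1)) ≠
        LinearMap.ker (Matrix.mulVecLin (S + 1)) := by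
      intro h
      rw [h] at hx₀notK'
      exact hx₀notK' hx₀mem
    have hfr : Module.finrank k (LinearMap.ker (Matrix.mulVecLin (S' + 1))) < d := by
      rw [← hd]
      exact Submodule.finrank_lt_finrank_of_lt (lt_of_le_of_ne hsub hne)
    have hdetS' := IH _ hfr S' hS' rfl
    rw [hS'def, det_mul] at hdetS'
    have hdT : T.det = 1 := by
      rw [hT, hw]
      exact transvection_det h2 v
    rw [hdT, mul_one] at hdetS'
    exact hdetS'

end DetOne

/-! ### The main theorem -/

section Main

variable {k : Type*} [Field k] {n : ℕ}

private abbrev fstRH (k : Type*) [Field k] : DualNumber k →+* k :=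
  (TrivSqZeroExt.fstHom k k k : DualNumber k →ₐ[k] k).toRingHom

lemma fst_dualConj (a : DualNumber k) :
    TrivSqZeroExt.fst (dualConj k a) = TrivSqZeroExt.fst a := by
  rw [dualConj, TrivSqZeroExt.fst_sub, TrivSqZeroExt.fst_inl, TrivSqZeroExt.fst_inr, sub_zero]

lemma dualConj_algebraMap (a : k) :
    dualConj k (algebraMap k (DualNumber k) a) = algebraMap k (DualNumber k) a := by
  rw [TrivSqZeroExt.algebraMap_eq_inl, dualConj, TrivSqZeroExt.fst_inl, TrivSqZeroExt.snd_inl,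
    TrivSqZeroExt.inr_zero, sub_zero]

lemma symplJR_eq (k : Type*) [Field k] (n : ℕ) :
    symplJR k n = fromBlocks 0 1 (-1) 0 := by
  rw [symplJR, symplJ, fromBlocks_map]
  have z : (0 : Matrix (Fin n) (Fin n) k).map (algebraMap k (DualNumber k)) = 0 :=
    Matrix.map_zero _ (map_zero _)
  have o : (1 : Matrix (Fin n) (Fin n) k).map (algebraMap k (DualNumber k)) = 1 :=
    Matrix.map_one _ (map_zero _) (map_one _)
  have no : (-1 : Matrix (Fin n) (Fin n) k).map (algebraMap k (DualNumber k)) = -1 := by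
    ext i j <;> by_cases h : i = j <;>
      simp [Matrix.map_apply, Matrix.one_apply, Matrix.neg_apply, h,
        TrivSqZeroExt.algebraMap_eq_inl]
  rw [z, o, no]

lemma symplJR_isUnit_det (k : Type*) [Field k] (n : ℕ) : IsUnit (symplJR k n).det := by
  rw [symplJR_eq]
  exact blockJ_isUnit_det

lemma dualRed_map_mul (x y : Matrix (Fin n ⊕ Fin n) (Fin n ⊕ Fin n) (DualNumber k)) :
    dualRed k n (x * y) = dualRed k n x * dualRed k n y := by
  show (x * y).map (fstRH k) = x.map (fstRH k) * y.map (fstRH k)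
  exact Matrix.map_mul

lemma dualRed_symplJR : dualRed k n (symplJR k n) = symplJ k n := by
  rw [dualRed, symplJR, Matrix.map_map]
  exact Matrix.map_id _

lemma dualRed_conj_transpose (x : Matrix (Fin n ⊕ Fin n) (Fin n ⊕ Fin n) (DualNumber k)) :
    dualRed k n (xᵀ.map (dualConj k)) = (dualRed k n x)ᵀ := by
  have : (TrivSqZeroExt.fst ∘ dualConj k : DualNumber k → k) = TrivSqZeroExt.fst :=
    funext fun a => fst_dualConj a
  show (xᵀ.map (dualConj k)).map TrivSqZeroExt.fst = (x.map TrivSqZeroExt.fst)ᵀ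
  rw [Matrix.map_map, this]
  exact Matrix.transpose_map

theorem dualRed_surjective_onto_symplectic'
    (k : Type*) [Field k] (hchar : ringChar k ≠ 2) (n : ℕ) :
    (∀ x ∈ specialUnitary k n,
        (dualRed k n x)ᵀ * symplJ k n * dualRed k n x = symplJ k n) ∧
    (∀ S : Matrix (Fin n ⊕ Fin n) (Fin n ⊕ Fin n) k,
        Sᵀ * symplJ k n * S = symplJ k n →
        ∃ x ∈ specialUnitary k n, dualRed k n x = S) ∧
    (∀ x ∈ specialUnitary k n, ∀ y ∈ specialUnitary k n,
        dualRed k n (x * y) = dualRed k n x * dualRed k n y) := by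
  have h2 : (2 : k) ≠ 0 := Ring.two_ne_zero hchar
  have hJRu : IsUnit (symplJR k n).det := symplJR_isUnit_det k n
  refine ⟨?_, ?_, ?_⟩
  · -- reduction of a unitary matrix is symplectic
    intro x hx
    obtain ⟨h1, -⟩ := hx
    rw [dualInvolution] at h1
    have h2' : symplJR k n * ((symplJR k n)⁻¹ * (xᵀ.map (dualConj k)) * symplJR k n * x)
        = symplJR k n := by rw [h1, Matrix.mul_one]
    have h3 : (xᵀ.map (dualConj k)) * (symplJR k n * x) = symplJR k n := by
      calc (xᵀ.map (dualConj k)) * (symplJR k n * x)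
          = (symplJR k n * (symplJR k n)⁻¹) * ((xᵀ.map (dualConj k)) * (symplJR k n * x)) := by
            rw [Matrix.mul_nonsing_inv _ hJRu, Matrix.one_mul]
        _ = symplJR k n * ((symplJR k n)⁻¹ * (xᵀ.map (dualConj k)) * symplJR k n * x) := by
            simp only [Matrix.mul_assoc]
        _ = symplJR k n := h2'
    have h4 := congrArg (dualRed k n) h3
    rw [dualRed_map_mul, dualRed_map_mul, dualRed_conj_transpose, dualRed_symplJR] at h4
    rw [Matrix.mul_assoc]
    exact h4
  · -- lifting a symplectic matrix
    intro S hS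
    have hS0 : Sᵀ * fromBlocks 0 1 (-1) 0 * S = fromBlocks 0 1 (-1) 0 := hS
    have hdet : S.det = 1 := symplectic_det_one (k := k) (n := n) h2 S hS0
    set g := algebraMap k (DualNumber k) with hg
    refine ⟨S.map g, ⟨?_, ?_⟩, ?_⟩
    · -- unitary condition
      have hcomp : (dualConj k ∘ ⇑g : k → DualNumber k) = ⇑g :=
        funext fun a => dualConj_algebraMap a
      have hconj : (S.map ⇑g)ᵀ.map (dualConj k) = Sᵀ.map ⇑g := by
        rw [← Matrix.transpose_map, Matrix.map_map, hcomp]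
      rw [dualInvolution, hconj]
      have hmul : Sᵀ.map g * (symplJR k n * S.map g) = symplJR k n := by
        rw [symplJR, ← Matrix.map_mul, ← Matrix.map_mul, ← Matrix.mul_assoc, hS]
      calc (symplJR k n)⁻¹ * (Sᵀ.map g) * symplJR k n * S.map g
          = (symplJR k n)⁻¹ * (Sᵀ.map g * (symplJR k n * S.map g)) := by
            simp only [Matrix.mul_assoc]
        _ = (symplJR k n)⁻¹ * symplJR k n := by rw [hmul]
        _ = 1 := Matrix.nonsing_inv_mul _ hJRu
    · -- determinant condition
      show (S.map (⇑g)).det = 1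
      have hmd : (S.map (⇑g)).det = g S.det := by
        rw [g.map_det S, RingHom.mapMatrix_apply]
      rw [hmd, hdet, RingHom.map_one]
    · -- reduction is S
      show (S.map g).map TrivSqZeroExt.fst = S
      rw [Matrix.map_map]
      exact Matrix.map_id _
  · -- multiplicativity
    intro x _ y _
    exact dualRed_map_mul x y

end Main


/-- The reduction map `ρ` restricts to a surjective group homomorphism
from `H` onto the symplectic group `Sp(2n, k) = { S : Sᵀ·J·S = J }`. -/
theorem dualRed_surjective_onto_symplectic
    (k : Type*) [Field k] (hchar : ringChar k ≠ 2) (n : ℕ) (hn : 1 ≤ n) :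
    (∀ x ∈ specialUnitary k n,
        (dualRed k n x)ᵀ * symplJ k n * dualRed k n x = symplJ k n) ∧
    (∀ S : Matrix (Fin n ⊕ Fin n) (Fin n ⊕ Fin n) k,
        Sᵀ * symplJ k n * S = symplJ k n →
        ∃ x ∈ specialUnitary k n, dualRed k n x = S) ∧
    (∀ x ∈ specialUnitary k n, ∀ y ∈ specialUnitary k n,
        dualRed k n (x * y) = dualRed k n x * dualRed k n y) := by
  exact dualRed_surjective_onto_symplectic' k hchar n

end
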